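/- If liminf_{t→∞} ‖z(t)‖ < +∞, then limsup_{t→∞} ‖z(t)‖ < +∞. -/

import Mathlib

open Filter

set_option maxHeartbeats 1000000 in
theorem stmt_6 (d : ℕ) (hd : 1 ≤ d)
    (f : EuclideanSpace ℝ (Fin d) → EuclideanSpace ℝ (Fin d)) (hf : Continuous f)
    (hf0 : f 0 = 0)
    (hdiss : ∀ x : EuclideanSpace ℝ (Fin d), x ≠ 0 → 0 < (inner ℝ x (f x) : ℝ))
    (Y z : ℝ → EuclideanSpace ℝ (Fin d))
    (hY : ContinuousOn Y (Set.Ici 0)) (hYlim : Tendsto Y atTop (nhds 0))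
    (hz : ∀ t : ℝ, 0 ≤ t → HasDerivAt z (-f (z t + Y t) + Y t) t)
    (hliminf : liminf (fun t : ℝ => (‖z t‖₊ : ENNReal)) atTop < ⊤) :
    limsup (fun t : ℝ => (‖z t‖₊ : ENNReal)) atTop < ⊤ := by
  -- Step 1: extract a real bound R with frequently ‖z t‖ ≤ R
  obtain ⟨b, hbdef⟩ : ∃ b : ENNReal, b = liminf (fun t : ℝ => (‖z t‖₊ : ENNReal)) atTop + 1 :=
    ⟨_, rfl⟩
  have hlt : liminf (fun t : ℝ => (‖z t‖₊ : ENNReal)) atTop < b := by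
    rw [hbdef]; exact ENNReal.lt_add_right hliminf.ne one_ne_zero
  have hfreq := frequently_lt_of_liminf_lt (by isBoundedDefault) hlt
  have hbtop : b ≠ ⊤ := by
    rw [hbdef]; exact (ENNReal.add_lt_top.2 ⟨hliminf, ENNReal.one_lt_top⟩).ne
  obtain ⟨R, hRdef⟩ : ∃ R : ℝ, R = b.toReal := ⟨_, rfl⟩
  have hR0 : 0 ≤ R := hRdef ▸ ENNReal.toReal_nonneg
  have hfreqR : ∃ᶠ t in atTop, ‖z t‖ ≤ R := by
    refine hfreq.mono fun t ht => ?_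
    have h2 : ((‖z t‖₊ : ENNReal)).toReal ≤ b.toReal :=
      ENNReal.toReal_mono hbtop ht.le
    rw [hRdef]; simpa using h2
  clear hlt hfreq hliminf hbdef hbtop hRdef
  -- Step 2: compact annulus constants
  obtain ⟨A, hAdef⟩ : ∃ A : Set (EuclideanSpace ℝ (Fin d)),
      A = Metric.closedBall 0 (R + 5/2) \ Metric.ball 0 (R + 1/2) := ⟨_, rfl⟩
  have hAmem : ∀ x : EuclideanSpace ℝ (Fin d),
      x ∈ A ↔ R + 1/2 ≤ ‖x‖ ∧ ‖x‖ ≤ R + 5/2 := by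
    intro x
    rw [hAdef]
    simp [Metric.mem_closedBall, Metric.mem_ball, dist_zero_right, not_lt, and_comm]
  have hAc : IsCompact A := by
    rw [hAdef]
    exact (isCompact_closedBall (0 : EuclideanSpace ℝ (Fin d)) _).diff Metric.isOpen_ball
  have hAne : A.Nonempty := by
    refine ⟨(R + 1) • EuclideanSpace.single (⟨0, hd⟩ : Fin d) (1 : ℝ), (hAmem _).2 ?_⟩
    rw [norm_smul, EuclideanSpace.norm_single]
    rw [Real.norm_eq_abs, abs_of_nonneg (by linarith), norm_one, mul_one]
    constructor <;> linarith
  have hcont1 : Continuous fun x : EuclideanSpace ℝ (Fin d) => (inner ℝ x (f x) : ℝ) :=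
    continuous_id.inner hf
  obtain ⟨x₀, hx₀A, hx₀⟩ := hAc.exists_isMinOn hAne hcont1.continuousOn
  obtain ⟨m, hmdef⟩ : ∃ m : ℝ, m = (inner ℝ x₀ (f x₀) : ℝ) := ⟨_, rfl⟩
  have hx₀ne : x₀ ≠ 0 := by
    intro h
    have h1 := ((hAmem x₀).1 hx₀A).1
    rw [h, norm_zero] at h1; linarith
  have hmpos : 0 < m := hmdef ▸ hdiss x₀ hx₀ne
  have hmmin : ∀ x ∈ A, m ≤ (inner ℝ x (f x) : ℝ) := fun x hx => hmdef ▸ hx₀ hx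
  obtain ⟨x₁, hx₁A, hx₁⟩ := hAc.exists_isMaxOn hAne hf.norm.continuousOn
  obtain ⟨M, hMdef⟩ : ∃ M : ℝ, M = ‖f x₁‖ := ⟨_, rfl⟩
  have hM0 : 0 ≤ M := hMdef ▸ norm_nonneg _
  have hMmax : ∀ x ∈ A, ‖f x‖ ≤ M := fun x hx => hMdef ▸ hx₁ hx
  clear hx₀ hx₁ hx₀A hx₁A hmdef hMdef hx₀ne hcont1 hAc hAne hAdef
  obtain ⟨ε, hεdef⟩ : ∃ ε : ℝ, ε = min (1/2) (m / (2 * (R + 3 + M))) := ⟨_, rfl⟩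
  have hDpos : (0:ℝ) < R + 3 + M := by linarith
  have hεpos : 0 < ε := hεdef ▸ lt_min (by norm_num) (div_pos hmpos (by linarith))
  have hεhalf : ε ≤ 1/2 := hεdef ▸ min_le_left _ _
  have hεm : ε * (M + R + 5/2) ≤ m / 2 := by
    have h1 : ε ≤ m / (2 * (R + 3 + M)) := hεdef ▸ min_le_right _ _
    have h2 : ε * (R + 3 + M) ≤ (m / (2 * (R + 3 + M))) * (R + 3 + M) :=
      mul_le_mul_of_nonneg_right h1 hDpos.le
    have h3 : (m / (2 * (R + 3 + M))) * (R + 3 + M) = m / 2 := by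
      field_simp
    nlinarith [hεpos.le]
  clear hεdef
  -- Step 3: choose t₀
  have hYε : ∀ᶠ t in atTop, ‖Y t‖ ≤ ε := by
    have := Metric.tendsto_nhds.mp hYlim ε hεpos
    filter_upwards [this] with t ht
    rw [dist_zero_right] at ht; exact ht.le
  obtain ⟨T, hT⟩ := eventually_atTop.mp (hYε.and (eventually_ge_atTop (0:ℝ)))
  obtain ⟨t₀, ⟨ht₀z, ht₀T⟩⟩ :=
    (hfreqR.and_eventually (eventually_ge_atTop T)).exists
  have ht₀0 : (0:ℝ) ≤ t₀ := (hT t₀ ht₀T).2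
  have hYsmall : ∀ t, t₀ ≤ t → ‖Y t‖ ≤ ε := fun t ht => (hT t (le_trans ht₀T ht)).1
  clear hYε hT hfreqR hYlim hY
  -- continuity helpers
  have hzc : ∀ t : ℝ, 0 ≤ t → ContinuousAt z t := fun t ht => (hz t ht).continuousAt
  -- Step 4: key claim
  have key : ∀ t, t₀ ≤ t → ‖z t‖ ≤ R + 2 := by
    by_contra hcon
    push_neg at hcon
    obtain ⟨t₁, ht₁, ht₁z⟩ := hcon
    have hnormc : ∀ s : Set ℝ, s ⊆ Set.Ici (0:ℝ) → ContinuousOn (fun t => ‖z t‖) s :=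
      fun s hs t ht => ((hzc t (hs ht)).norm).continuousWithinAt
    -- last time ≤ R+1
    obtain ⟨S, hSdef⟩ : ∃ S : Set ℝ,
        S = Set.Icc t₀ t₁ ∩ (fun t => ‖z t‖) ⁻¹' Set.Iic (R + 1) := ⟨_, rfl⟩
    have hSsub : Set.Icc t₀ t₁ ⊆ Set.Ici (0:ℝ) := fun x hx => le_trans ht₀0 hx.1
    have hSclosed : IsClosed S := by
      rw [hSdef]
      exact (hnormc _ hSsub).preimage_isClosed_of_isClosed isClosed_Icc isClosed_Iic
    have hSmem : ∀ x : ℝ, x ∈ S ↔ (t₀ ≤ x ∧ x ≤ t₁) ∧ ‖z x‖ ≤ R + 1 := by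
      intro x; rw [hSdef]; simp [Set.mem_Icc]
    have ht₀S : t₀ ∈ S := (hSmem t₀).2 ⟨⟨le_refl _, ht₁⟩, by linarith⟩
    have hSbdd : BddAbove S := ⟨t₁, fun x hx => ((hSmem x).1 hx).1.2⟩
    obtain ⟨s, hsdef⟩ : ∃ s : ℝ, s = sSup S := ⟨_, rfl⟩
    have hsS : s ∈ S := hsdef ▸ hSclosed.csSup_mem ⟨t₀, ht₀S⟩ hSbdd
    have hsmax : ∀ x ∈ S, x ≤ s := fun x hx => hsdef ▸ le_csSup hSbdd hx
    have hst₀ : t₀ ≤ s := ((hSmem s).1 hsS).1.1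
    have hst₁ : s ≤ t₁ := ((hSmem s).1 hsS).1.2
    have hzs : ‖z s‖ ≤ R + 1 := ((hSmem s).1 hsS).2
    have hslt : s < t₁ := lt_of_le_of_ne hst₁ (fun h => by rw [h] at hzs; linarith)
    clear hsdef hSclosed ht₀S hsS hSdef
    -- first time ≥ R+2 after s
    obtain ⟨U, hUdef⟩ : ∃ U : Set ℝ,
        U = Set.Icc s t₁ ∩ (fun t => ‖z t‖) ⁻¹' Set.Ici (R + 2) := ⟨_, rfl⟩
    have hUsub : Set.Icc s t₁ ⊆ Set.Ici (0:ℝ) := fun x hx => le_trans (le_trans ht₀0 hst₀) hx.1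
    have hUclosed : IsClosed U := by
      rw [hUdef]
      exact (hnormc _ hUsub).preimage_isClosed_of_isClosed isClosed_Icc isClosed_Ici
    have hUmem : ∀ x : ℝ, x ∈ U ↔ (s ≤ x ∧ x ≤ t₁) ∧ R + 2 ≤ ‖z x‖ := by
      intro x; rw [hUdef]; simp [Set.mem_Icc]
    have ht₁U : t₁ ∈ U := (hUmem t₁).2 ⟨⟨hslt.le, le_refl _⟩, ht₁z.le⟩
    have hUbdd : BddBelow U := ⟨s, fun x hx => ((hUmem x).1 hx).1.1⟩
    obtain ⟨u, hudef⟩ : ∃ u : ℝ, u = sInf U := ⟨_, rfl⟩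
    have huU : u ∈ U := hudef ▸ hUclosed.csInf_mem ⟨t₁, ht₁U⟩ hUbdd
    have humin : ∀ x ∈ U, u ≤ x := fun x hx => hudef ▸ csInf_le hUbdd hx
    have hus : s ≤ u := ((hUmem u).1 huU).1.1
    have hut₁ : u ≤ t₁ := ((hUmem u).1 huU).1.2
    have hzu : R + 2 ≤ ‖z u‖ := ((hUmem u).1 huU).2
    have hsu : s < u := lt_of_le_of_ne hus (fun h => by rw [← h] at hzu; linarith)
    clear hudef hUclosed ht₁U huU hUdef
    -- bounds on (s,u)
    have hmid : ∀ t ∈ Set.Ioo s u, R + 1 ≤ ‖z t‖ ∧ ‖z t‖ ≤ R + 2 := by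
      rintro t ⟨hts, htu⟩
      constructor
      · by_contra hcon2
        push_neg at hcon2
        have htS : t ∈ S := (hSmem t).2
          ⟨⟨le_trans hst₀ hts.le, le_trans htu.le hut₁⟩, hcon2.le⟩
        exact absurd (hsmax t htS) (not_le.2 hts)
      · by_contra hcon2
        push_neg at hcon2
        have htU : t ∈ U := (hUmem t).2 ⟨⟨hts.le, le_trans htu.le hut₁⟩, hcon2.le⟩
        exact absurd (humin t htU) (not_le.2 htu)
    -- the Lyapunov argument
    have hIoo0 : ∀ t ∈ Set.Ioo s u, (0:ℝ) ≤ t :=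
      fun t ht => le_trans (le_trans ht₀0 hst₀) ht.1.le
    have hGant : AntitoneOn (fun t => (inner ℝ (z t) (z t) : ℝ)) (Set.Icc s u) := by
      apply antitoneOn_of_hasDerivWithinAt_nonpos (convex_Icc s u)
        (f' := fun t => (inner ℝ (z t) (-f (z t + Y t) + Y t) : ℝ)
          + (inner ℝ (-f (z t + Y t) + Y t) (z t) : ℝ))
      · intro t ht
        have ht0 : (0:ℝ) ≤ t := le_trans (le_trans ht₀0 hst₀) ht.1
        exact ((hzc t ht0).inner (hzc t ht0)).continuousWithinAt
      · intro t ht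
        rw [interior_Icc] at ht
        exact (HasDerivAt.inner (𝕜 := ℝ) (hz t (hIoo0 t ht)) (hz t (hIoo0 t ht))).hasDerivWithinAt
      · intro t ht
        rw [interior_Icc] at ht
        have ht0 : (0:ℝ) ≤ t := hIoo0 t ht
        have htt₀ : t₀ ≤ t := le_trans hst₀ ht.1.le
        obtain ⟨hz1, hz2⟩ := hmid t ht
        have hy : ‖Y t‖ ≤ ε := hYsmall t htt₀
        obtain ⟨x, hxdef⟩ : ∃ x : EuclideanSpace ℝ (Fin d), x = z t + Y t := ⟨_, rfl⟩
        have hwx : z t = x - Y t := by rw [hxdef]; abel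
        have hx2 : ‖x‖ ≤ R + 5/2 := by
          have h := norm_add_le (z t) (Y t)
          rw [← hxdef] at h; linarith
        have hx1 : R + 1/2 ≤ ‖x‖ := by
          have h := norm_add_le x (-Y t)
          rw [norm_neg] at h
          have hxx : x + -Y t = z t := by rw [hxdef]; abel
          rw [hxx] at h; linarith
        have hxA : x ∈ A := (hAmem x).2 ⟨hx1, hx2⟩
        have hmx : m ≤ (inner ℝ x (f x) : ℝ) := hmmin x hxA
        have hMx : ‖f x‖ ≤ M := hMmax x hxA
        have hsplit : (inner ℝ (z t) (-f x + Y t) : ℝ)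
            = -(inner ℝ x (f x) : ℝ) + (inner ℝ (Y t) (f x) : ℝ) + (inner ℝ (z t) (Y t) : ℝ) := by
          rw [inner_add_right, inner_neg_right]
          nth_rewrite 1 [hwx]
          rw [inner_sub_left (𝕜 := ℝ) x (Y t) (f x)]
          ring
        have hb1 : (inner ℝ (Y t) (f x) : ℝ) ≤ ‖Y t‖ * ‖f x‖ := real_inner_le_norm _ _
        have hb2 : (inner ℝ (z t) (Y t) : ℝ) ≤ ‖z t‖ * ‖Y t‖ := real_inner_le_norm _ _
        have hkey : (inner ℝ (z t) (-f x + Y t) : ℝ) ≤ 0 := by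
          rw [hsplit]
          have hp1 : ‖Y t‖ * ‖f x‖ ≤ ε * M :=
            mul_le_mul hy hMx (norm_nonneg _) hεpos.le
          have hp2 : ‖z t‖ * ‖Y t‖ ≤ (R + 2) * ε :=
            mul_le_mul hz2 hy (norm_nonneg _) (by linarith)
          nlinarith [hεpos.le]
        have hcomm : (inner ℝ (-f (z t + Y t) + Y t) (z t) : ℝ)
            = (inner ℝ (z t) (-f (z t + Y t) + Y t) : ℝ) := real_inner_comm _ _
        rw [hcomm, ← hxdef]
        linarith
    have hGle := hGant (Set.left_mem_Icc.2 hsu.le) (Set.right_mem_Icc.2 hsu.le) hsu.le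
    have hGs : (inner ℝ (z s) (z s) : ℝ) = ‖z s‖ ^ 2 := real_inner_self_eq_norm_sq _
    have hGu : (inner ℝ (z u) (z u) : ℝ) = ‖z u‖ ^ 2 := real_inner_self_eq_norm_sq _
    simp only [hGs, hGu] at hGle
    nlinarith [norm_nonneg (z s), norm_nonneg (z u)]
  -- Step 5: conclude
  have hev : ∀ᶠ t in atTop, (fun t : ℝ => (‖z t‖₊ : ENNReal)) t ≤ ENNReal.ofReal (R + 2) := by
    filter_upwards [eventually_ge_atTop t₀] with t ht
    rw [← ENNReal.ofReal_coe_nnreal, coe_nnnorm]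
    exact ENNReal.ofReal_le_ofReal (key t ht)
  exact lt_of_le_of_lt (limsup_le_of_le (by isBoundedDefault) hev) ENNReal.ofReal_lt_top
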